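/- Fix n₁, n₂ > 0 and let p₁, p₂ ∈ S^{n₁,n₂} be elliptic symbols in S^{n₁,n₂} having the same principal symbol. Let n₊ = max(n₁, n₂). Then there exists a constant C > 0 such that |φ₂^t(ρ) − φ₁^t(ρ)| ≤ exp(C·t·⟨p₁(ρ)⟩^{max(0, 1 − 2/n₊)}) for all ρ ∈ ℝ^{2d} and all t ≥ 0, where ⟨y⟩ = (1+|y|²)^{1/2}. In particular, when n₁, n₂ ≤ 2, there exists C > 0 with |φ₂^t(ρ) − φ₁^t(ρ)| ≤ e^{Ct} for all ρ ∈ ℝ^{2d} and t ≥ 0. -/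

import Mathlib

noncomputable section

/-- The phase space `ℝ^{2d} ≃ ℝ^d_x × ℝ^d_ξ`, as a Euclidean space indexed by `Fin d ⊕ Fin d`. -/
abbrev PhaseSpace (d : ℕ) := EuclideanSpace ℝ (Fin d ⊕ Fin d)

/-- The position component `x` of a phase space point `ρ = (x, ξ)`. -/
def posPart {d : ℕ} (ρ : PhaseSpace d) : EuclideanSpace ℝ (Fin d) :=
  WithLp.toLp 2 (fun i => ρ (Sum.inl i))

/-- The momentum component `ξ` of a phase space point `ρ = (x, ξ)`. -/
def momPart {d : ℕ} (ρ : PhaseSpace d) : EuclideanSpace ℝ (Fin d) :=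
  WithLp.toLp 2 (fun i => ρ (Sum.inr i))

/-- The Japanese bracket `⟨x⟩ = (1 + |x|²)^{1/2}`. -/
def jap {E : Type*} [NormedAddCommGroup E] (x : E) : ℝ := Real.sqrt (1 + ‖x‖ ^ 2)

/-- Membership in the symbol class `S^{n₁,n₂}`: `a` is smooth and for every derivative
order `k`, `‖D^k a(x,ξ)‖ ≤ C (⟨x⟩^{n₁-k} + ⟨ξ⟩^{n₂-k})`. -/
def InSymbolClass (d : ℕ) (n₁ n₂ : ℝ) (a : PhaseSpace d → ℝ) : Prop :=
  ContDiff ℝ (⊤ : ℕ∞) a ∧ ∀ k : ℕ, ∃ C > 0, ∀ ρ : PhaseSpace d,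
    ‖iteratedFDeriv ℝ k a ρ‖ ≤ C * (jap (posPart ρ) ^ (n₁ - k) + jap (momPart ρ) ^ (n₂ - k))

/-- Ellipticity in the class `S^{n₁,n₂}`: `a(x,ξ) ≥ c (⟨x⟩^{n₁} + ⟨ξ⟩^{n₂})` for `|(x,ξ)|`
large enough. -/
def IsElliptic (d : ℕ) (n₁ n₂ : ℝ) (a : PhaseSpace d → ℝ) : Prop :=
  ∃ c > 0, ∃ R₀ > 0, ∀ ρ : PhaseSpace d, R₀ ≤ ‖ρ‖ →
    c * (jap (posPart ρ) ^ n₁ + jap (momPart ρ) ^ n₂) ≤ a ρ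

/-- The standard symplectic matrix `J = [[0, I], [-I, 0]]` acting on phase space:
`J (x, ξ) = (ξ, -x)`. -/
def symplJ {d : ℕ} (ρ : PhaseSpace d) : PhaseSpace d :=
  WithLp.toLp 2 (fun i => match i with
  | Sum.inl j => ρ (Sum.inr j)
  | Sum.inr j => -ρ (Sum.inl j))

/-- `φ` is the (globally defined) Hamiltonian flow of `p`:
`φ⁰(ρ) = ρ` and `(d/dt) φᵗ(ρ) = J ∇p(φᵗ(ρ))`. -/
def IsHamFlow (d : ℕ) (p : PhaseSpace d → ℝ) (φ : ℝ → PhaseSpace d → PhaseSpace d) : Prop :=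
  (∀ ρ, φ 0 ρ = ρ) ∧ ∀ ρ t, HasDerivAt (fun s => φ s ρ) (symplJ (gradient p (φ t ρ))) t


open RealInnerProductSpace

namespace StmtAux


lemma jap_nonneg {E : Type*} [NormedAddCommGroup E] (x : E) : 0 ≤ jap x := Real.sqrt_nonneg _

lemma one_le_jap {E : Type*} [NormedAddCommGroup E] (x : E) : 1 ≤ jap x := by
  have h := Real.sqrt_le_sqrt (by nlinarith [sq_nonneg ‖x‖] : (1:ℝ) ≤ 1 + ‖x‖^2)
  simpa [jap] using h

lemma norm_le_jap {E : Type*} [NormedAddCommGroup E] (x : E) : ‖x‖ ≤ jap x := by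
  rw [jap, show ‖x‖ = Real.sqrt (‖x‖^2) by simp [Real.sqrt_sq (norm_nonneg x)]]
  exact Real.sqrt_le_sqrt (by nlinarith [Real.sq_sqrt (by positivity : (0:ℝ) ≤ ‖x‖^2)])

lemma jap_mono {E F : Type*} [NormedAddCommGroup E] [NormedAddCommGroup F] {x : E} {y : F}
    (h : ‖x‖ ≤ ‖y‖) : jap x ≤ jap y := by
  apply Real.sqrt_le_sqrt; nlinarith [norm_nonneg x]

lemma jap_le_one_add_abs (r : ℝ) : jap r ≤ 1 + |r| := by
  rw [jap, show (1:ℝ) + |r| = Real.sqrt ((1+|r|)^2) by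
    rw [Real.sqrt_sq (by positivity)]]
  apply Real.sqrt_le_sqrt
  have : ‖r‖ = |r| := rfl
  nlinarith [abs_nonneg r]

lemma norm_posPart_le {d : ℕ} (ρ : PhaseSpace d) : ‖posPart ρ‖ ≤ ‖ρ‖ := by
  rw [EuclideanSpace.norm_eq, EuclideanSpace.norm_eq]
  apply Real.sqrt_le_sqrt
  rw [Fintype.sum_sum_type]
  have h : ∀ i : Fin d, ‖posPart ρ i‖ ^ 2 = ‖ρ (Sum.inl i)‖ ^ 2 := fun i => rfl
  simp only [h]
  have : (0:ℝ) ≤ ∑ i : Fin d, ‖ρ (Sum.inr i)‖ ^ 2 := by positivity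
  linarith

lemma norm_momPart_le {d : ℕ} (ρ : PhaseSpace d) : ‖momPart ρ‖ ≤ ‖ρ‖ := by
  rw [EuclideanSpace.norm_eq, EuclideanSpace.norm_eq]
  apply Real.sqrt_le_sqrt
  rw [Fintype.sum_sum_type]
  have h : ∀ i : Fin d, ‖momPart ρ i‖ ^ 2 = ‖ρ (Sum.inr i)‖ ^ 2 := fun i => rfl
  simp only [h]
  have : (0:ℝ) ≤ ∑ i : Fin d, ‖ρ (Sum.inl i)‖ ^ 2 := by positivity
  linarith

lemma symplJ_sub {d : ℕ} (a b : PhaseSpace d) : symplJ (a - b) = symplJ a - symplJ b := by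
  ext i
  cases i with
  | inl j => show (a-b) (Sum.inr j) = _ ; simp [symplJ, PiLp.sub_apply]
  | inr j => show -((a-b) (Sum.inl j)) = _ ; simp [symplJ, PiLp.sub_apply]; ring

lemma norm_symplJ {d : ℕ} (v : PhaseSpace d) : ‖symplJ v‖ = ‖v‖ := by
  rw [EuclideanSpace.norm_eq, EuclideanSpace.norm_eq, Fintype.sum_sum_type,
    Fintype.sum_sum_type]
  congr 1
  have h1 : ∀ j : Fin d, ‖symplJ v (Sum.inl j)‖^2 = ‖v (Sum.inr j)‖^2 := fun j => rfl
  have h2 : ∀ j : Fin d, ‖symplJ v (Sum.inr j)‖^2 = ‖v (Sum.inl j)‖^2 := by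
    intro j; show ‖-(v (Sum.inl j))‖^2 = _; rw [norm_neg]
  simp only [h1, h2]; ring

lemma inner_symplJ_self {d : ℕ} (v : PhaseSpace d) : ⟪v, symplJ v⟫ = 0 := by
  rw [PiLp.inner_apply, Fintype.sum_sum_type]
  have h1 : ∀ j : Fin d, ⟪v (Sum.inl j), symplJ v (Sum.inl j)⟫
      = v (Sum.inl j) * v (Sum.inr j) := fun j => by simp [symplJ, mul_comm]
  have h2 : ∀ j : Fin d, ⟪v (Sum.inr j), symplJ v (Sum.inr j)⟫
      = v (Sum.inr j) * (-(v (Sum.inl j))) := fun j => by simp [symplJ, mul_comm]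
  simp only [h1, h2]
  rw [← Finset.sum_add_distrib]
  apply Finset.sum_eq_zero; intro j _; ring


variable {d : ℕ}


lemma fderiv_apply_eq_inner (p : PhaseSpace d → ℝ) (σ v : PhaseSpace d) :
    fderiv ℝ p σ v = ⟪gradient p σ, v⟫ := by
  rw [gradient]; exact (InnerProductSpace.toDual_symm_apply).symm

lemma gradient_sub_norm (p q : PhaseSpace d → ℝ) (σ τ : PhaseSpace d) :
    ‖gradient p σ - gradient q τ‖ = ‖fderiv ℝ p σ - fderiv ℝ q τ‖ := by
  rw [gradient, gradient, ← map_sub]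
  exact LinearIsometryEquiv.norm_map _ _

lemma energy_conserved (p : PhaseSpace d → ℝ) (hp : ContDiff ℝ (⊤:ℕ∞) p)
    (φ : ℝ → PhaseSpace d → PhaseSpace d) (hφ : IsHamFlow d p φ) (t : ℝ) (ρ : PhaseSpace d) :
    p (φ t ρ) = p ρ := by
  have hdiff : ∀ s : ℝ, HasDerivAt (fun u => p (φ u ρ)) 0 s := by
    intro s
    have h1 : HasDerivAt (fun u => φ u ρ) (symplJ (gradient p (φ s ρ))) s := hφ.2 ρ s
    have h2 : HasFDerivAt p (fderiv ℝ p (φ s ρ)) (φ s ρ) :=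
      (hp.differentiable (by simp) (φ s ρ)).hasFDerivAt
    have h3 := h2.comp_hasDerivAt s h1
    have h4 : fderiv ℝ p (φ s ρ) (symplJ (gradient p (φ s ρ))) = 0 := by
      rw [fderiv_apply_eq_inner]; exact inner_symplJ_self _
    rwa [h4] at h3
  have h := is_const_of_deriv_eq_zero (fun s => (hdiff s).differentiableAt)
    (fun s => (hdiff s).deriv) t 0
  simpa [hφ.1 ρ] using h

lemma norm_fderiv_eq_iteratedFDeriv_one (g : PhaseSpace d → ℝ) (σ : PhaseSpace d) :
    ‖fderiv ℝ g σ‖ = ‖iteratedFDeriv ℝ 1 g σ‖ := by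
  rw [← norm_iteratedFDeriv_fderiv (n := 0), norm_iteratedFDeriv_zero]

lemma norm_fderiv2_eq_iteratedFDeriv_two (g : PhaseSpace d → ℝ) (σ : PhaseSpace d) :
    ‖fderiv ℝ (fderiv ℝ g) σ‖ = ‖iteratedFDeriv ℝ 2 g σ‖ := by
  rw [← norm_iteratedFDeriv_fderiv (n := 1) (f := g),
    ← norm_iteratedFDeriv_fderiv (n := 0) (f := fderiv ℝ g), norm_iteratedFDeriv_zero]

lemma rpow_sub_two_bound {a n K E θ : ℝ} (ha : 1 ≤ a) (hn : 0 < n) (hK : 1 ≤ K) (hE : 1 ≤ E)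
    (hθ0 : 0 ≤ θ) (hθ : (n - 2) / n ≤ θ) (h : a ^ n ≤ K * E) :
    a ^ (n - 2) ≤ K * E ^ θ := by
  have hEθ : 1 ≤ E ^ θ := Real.one_le_rpow hE hθ0
  rcases le_or_gt n 2 with h2 | h2
  · have h3 : a ^ (n-2) ≤ 1 := Real.rpow_le_one_of_one_le_of_nonpos ha (by linarith)
    nlinarith
  · have he0 : 0 ≤ (n-2)/n := div_nonneg (by linarith) hn.le
    have he1 : (n-2)/n ≤ 1 := by rw [div_le_one hn]; linarith
    have key : a ^ (n-2) = (a ^ n) ^ ((n-2)/n) := by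
      rw [← Real.rpow_mul (by linarith : (0:ℝ) ≤ a)]
      congr 1; field_simp
    rw [key]
    calc (a^n)^((n-2)/n) ≤ (K*E)^((n-2)/n) :=
          Real.rpow_le_rpow (Real.rpow_nonneg (by linarith) n) h he0
      _ = K^((n-2)/n) * E^((n-2)/n) := Real.mul_rpow (by linarith) (by linarith)
      _ ≤ K * E^θ := by
          have h1 : K^((n-2)/n) ≤ K := by
            calc K^((n-2)/n) ≤ K^(1:ℝ) := Real.rpow_le_rpow_of_exponent_le hK he1
              _ = K := Real.rpow_one K
          have h2' : E^((n-2)/n) ≤ E^θ := Real.rpow_le_rpow_of_exponent_le hE hθ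
          have h3 : 0 ≤ E^((n-2)/n) := Real.rpow_nonneg (by linarith) _
          have h4 : 0 ≤ K^((n-2)/n) := Real.rpow_nonneg (by linarith) _
          nlinarith

lemma elliptic_jap_bound {n₁ n₂ : ℝ} (hn₁ : 0 < n₁) (hn₂ : 0 < n₂) (p : PhaseSpace d → ℝ)
    (he : IsElliptic d n₁ n₂ p) :
    ∃ K, 1 ≤ K ∧ ∀ σ : PhaseSpace d,
      jap (posPart σ) ^ n₁ + jap (momPart σ) ^ n₂ ≤ K * jap (p σ) := by
  obtain ⟨c, hc, R₀, hR₀, hell⟩ := he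
  set B : ℝ := Real.sqrt (1 + R₀^2) with hBdef
  have hB1 : 1 ≤ B := by
    have h := Real.sqrt_le_sqrt (by nlinarith : (1:ℝ) ≤ 1 + R₀^2)
    rwa [Real.sqrt_one] at h
  have hc' : 0 < 1/c := by positivity
  refine ⟨max (1/c) (B^n₁ + B^n₂) + 1,
    by nlinarith [le_max_left (1/c) (B^n₁ + B^n₂)], ?_⟩
  intro σ
  set S := jap (posPart σ) ^ n₁ + jap (momPart σ) ^ n₂ with hSdef
  have hS0 : 0 ≤ S := by
    have := Real.rpow_nonneg (jap_nonneg (posPart σ)) n₁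
    have := Real.rpow_nonneg (jap_nonneg (momPart σ)) n₂
    positivity
  have hjap1 : 1 ≤ jap (p σ) := one_le_jap _
  rcases le_or_gt R₀ ‖σ‖ with h | h
  · have h1 : c * S ≤ p σ := hell σ h
    have h2 : p σ ≤ jap (p σ) := le_trans (le_abs_self _) (norm_le_jap (p σ))
    have h3 : c * S ≤ jap (p σ) := le_trans h1 h2
    have h4 : (1/c) ≤ max (1/c) (B^n₁ + B^n₂) + 1 := le_trans (le_max_left _ _) (by linarith)
    have hcK : 1 ≤ c * (max (1/c) (B^n₁ + B^n₂) + 1) := by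
      have he : c * (1/c) = 1 := by field_simp
      have := mul_le_mul_of_nonneg_left h4 hc.le
      linarith
    calc S = 1 * S := (one_mul S).symm
      _ ≤ (c * (max (1/c) (B^n₁ + B^n₂) + 1)) * S := mul_le_mul_of_nonneg_right hcK hS0
      _ = (max (1/c) (B^n₁ + B^n₂) + 1) * (c * S) := by ring
      _ ≤ (max (1/c) (B^n₁ + B^n₂) + 1) * jap (p σ) :=
          mul_le_mul_of_nonneg_left h3 (by nlinarith [le_max_left (1/c) (B^n₁ + B^n₂)])
  · have hx : jap (posPart σ) ≤ B := by
      apply Real.sqrt_le_sqrt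
      have h1 : ‖posPart σ‖ ≤ R₀ := le_trans (norm_posPart_le σ) h.le
      nlinarith [norm_nonneg (posPart σ)]
    have hξ : jap (momPart σ) ≤ B := by
      apply Real.sqrt_le_sqrt
      have h1 : ‖momPart σ‖ ≤ R₀ := le_trans (norm_momPart_le σ) h.le
      nlinarith [norm_nonneg (momPart σ)]
    have h1 : jap (posPart σ) ^ n₁ ≤ B ^ n₁ :=
      Real.rpow_le_rpow (jap_nonneg _) hx hn₁.le
    have h2 : jap (momPart σ) ^ n₂ ≤ B ^ n₂ :=
      Real.rpow_le_rpow (jap_nonneg _) hξ hn₂.le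
    have h3 : B^n₁ + B^n₂ ≤ max (1/c) (B^n₁ + B^n₂) + 1 :=
      le_trans (le_max_right _ _) (by linarith)
    have h4 : 0 ≤ B^n₁ + B^n₂ := by positivity
    nlinarith




lemma segment_S_bound {n₁ n₂ : ℝ} (hn₁ : 0 < n₁) (hn₂ : 0 < n₂) {a b σ : PhaseSpace d}
    (hσ : σ ∈ segment ℝ a b) {M : ℝ}
    (hA : jap (posPart a) ^ n₁ + jap (momPart a) ^ n₂ ≤ M)
    (hB : jap (posPart b) ^ n₁ + jap (momPart b) ^ n₂ ≤ M) :
    jap (posPart σ) ^ n₁ + jap (momPart σ) ^ n₂ ≤ 2 * M := by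
  obtain ⟨u, v, hu, hv, huv, rfl⟩ := hσ
  have hx0 : (0:ℝ) ≤ jap (posPart a) ^ n₁ := Real.rpow_nonneg (jap_nonneg _) _
  have hx0' : (0:ℝ) ≤ jap (posPart b) ^ n₁ := Real.rpow_nonneg (jap_nonneg _) _
  have hξ0 : (0:ℝ) ≤ jap (momPart a) ^ n₂ := Real.rpow_nonneg (jap_nonneg _) _
  have hξ0' : (0:ℝ) ≤ jap (momPart b) ^ n₂ := Real.rpow_nonneg (jap_nonneg _) _
  have hgen : ∀ (P : PhaseSpace d → EuclideanSpace ℝ (Fin d)) (n : ℝ), 0 < n →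
      (∀ x y : PhaseSpace d, P (x + y) = P x + P y) →
      (∀ (c : ℝ) (x : PhaseSpace d), P (c • x) = c • P x) →
      jap (P (u • a + v • b)) ^ n ≤ jap (P a) ^ n + jap (P b) ^ n := by
    intro P n hn hadd hsmul
    have h1 : ‖P (u • a + v • b)‖ ≤ u * ‖P a‖ + v * ‖P b‖ := by
      rw [hadd, hsmul, hsmul]
      refine le_trans (norm_add_le _ _) ?_
      rw [norm_smul, norm_smul, Real.norm_of_nonneg hu, Real.norm_of_nonneg hv]
    rcases le_total ‖P a‖ ‖P b‖ with h | h
    · have h2 : ‖P (u • a + v • b)‖ ≤ ‖P b‖ := by nlinarith [norm_nonneg (P a)]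
      have h3 : jap (P (u • a + v • b)) ≤ jap (P b) := jap_mono h2
      have h4 : jap (P (u • a + v • b)) ^ n ≤ jap (P b) ^ n :=
        Real.rpow_le_rpow (jap_nonneg _) h3 hn.le
      have h5 : (0:ℝ) ≤ jap (P a) ^ n := Real.rpow_nonneg (jap_nonneg _) _
      linarith
    · have h2 : ‖P (u • a + v • b)‖ ≤ ‖P a‖ := by nlinarith [norm_nonneg (P b)]
      have h3 : jap (P (u • a + v • b)) ≤ jap (P a) := jap_mono h2
      have h4 : jap (P (u • a + v • b)) ^ n ≤ jap (P a) ^ n :=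
        Real.rpow_le_rpow (jap_nonneg _) h3 hn.le
      have h5 : (0:ℝ) ≤ jap (P b) ^ n := Real.rpow_nonneg (jap_nonneg _) _
      linarith
  have hp := hgen posPart n₁ hn₁ (fun x y => rfl) (fun c x => rfl)
  have hm := hgen momPart n₂ hn₂ (fun x y => rfl) (fun c x => rfl)
  linarith


end StmtAux

set_option maxHeartbeats 1000000 in
open StmtAux in
theorem stmt_1 (d : ℕ) (n₁ n₂ : ℝ) (hn₁ : 0 < n₁) (hn₂ : 0 < n₂)
    (p₁ p₂ : PhaseSpace d → ℝ)
    (hp₁ : InSymbolClass d n₁ n₂ p₁) (hp₂ : InSymbolClass d n₁ n₂ p₂)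
    (he₁ : IsElliptic d n₁ n₂ p₁) (he₂ : IsElliptic d n₁ n₂ p₂)
    (hsame : InSymbolClass d (n₁ - 1) (n₂ - 1) (fun ρ => p₂ ρ - p₁ ρ))
    (φ₁ φ₂ : ℝ → PhaseSpace d → PhaseSpace d)
    (hφ₁ : IsHamFlow d p₁ φ₁) (hφ₂ : IsHamFlow d p₂ φ₂) :
    (∃ C > 0, ∀ ρ : PhaseSpace d, ∀ t : ℝ, 0 ≤ t →
      ‖φ₂ t ρ - φ₁ t ρ‖ ≤ Real.exp (C * t * jap (p₁ ρ) ^ max 0 (1 - 2 / max n₁ n₂))) ∧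
    (n₁ ≤ 2 → n₂ ≤ 2 → ∃ C > 0, ∀ ρ : PhaseSpace d, ∀ t : ℝ, 0 ≤ t →
      ‖φ₂ t ρ - φ₁ t ρ‖ ≤ Real.exp (C * t)) := by
  have hdiff₁ : ∀ σ, DifferentiableAt ℝ p₁ σ :=
    fun σ => (hp₁.1.differentiable (by simp)) σ
  have hdiff₂ : ∀ σ, DifferentiableAt ℝ p₂ σ :=
    fun σ => (hp₂.1.differentiable (by simp)) σ
  have hgrad2diff : ∀ σ, DifferentiableAt ℝ (fderiv ℝ p₁) σ := by
    intro σ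
    have h := (hp₁.1.fderiv_right (m := (⊤:ℕ∞)) (by exact_mod_cast le_top))
    exact (h.differentiable (by simp)) σ
  set θ : ℝ := max 0 (1 - 2 / max n₁ n₂) with hθdef
  have hθ0 : 0 ≤ θ := le_max_left _ _
  have hnmax : 0 < max n₁ n₂ := lt_max_of_lt_left hn₁
  have hθe : ∀ n : ℝ, 0 < n → n ≤ max n₁ n₂ → (n - 2) / n ≤ θ := by
    intro n hn hnle
    have h1 : 2 / max n₁ n₂ ≤ 2 / n :=
      div_le_div_of_nonneg_left (by norm_num) hn hnle
    have h2 : (n - 2) / n = 1 - 2 / n := by field_simp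
    have h3 : 1 - 2 / max n₁ n₂ ≤ θ := le_max_right _ _
    linarith
  have hθ₁ : (n₁ - 2) / n₁ ≤ θ := hθe n₁ hn₁ (le_max_left _ _)
  have hθ₂ : (n₂ - 2) / n₂ ≤ θ := hθe n₂ hn₂ (le_max_right _ _)
  obtain ⟨K₁, hK₁, hKb₁⟩ := elliptic_jap_bound hn₁ hn₂ p₁ he₁
  obtain ⟨K₂, hK₂, hKb₂⟩ := elliptic_jap_bound hn₁ hn₂ p₂ he₂
  obtain ⟨C₀, hC₀, hC₀b⟩ := hsame.2 0
  -- comparison of the two energies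
  have hcomp : ∀ ρ : PhaseSpace d, jap (p₂ ρ) ≤ (2 + C₀ * K₁) * jap (p₁ ρ) := by
    intro ρ
    have h1 : |p₂ ρ - p₁ ρ| ≤ C₀ * (jap (posPart ρ) ^ (n₁ - 1) + jap (momPart ρ) ^ (n₂ - 1)) := by
      have h := hC₀b ρ
      rw [norm_iteratedFDeriv_zero] at h
      simpa using h
    have h2 : jap (posPart ρ) ^ (n₁ - 1) ≤ jap (posPart ρ) ^ n₁ :=
      Real.rpow_le_rpow_of_exponent_le (one_le_jap _) (by linarith)
    have h3 : jap (momPart ρ) ^ (n₂ - 1) ≤ jap (momPart ρ) ^ n₂ :=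
      Real.rpow_le_rpow_of_exponent_le (one_le_jap _) (by linarith)
    have h4 := hKb₁ ρ
    have h5 : |p₁ ρ| ≤ jap (p₁ ρ) := norm_le_jap (p₁ ρ)
    have h6 := jap_le_one_add_abs (p₂ ρ)
    have h7 : 1 ≤ jap (p₁ ρ) := one_le_jap _
    have habs : |p₂ ρ| ≤ |p₁ ρ| + |p₂ ρ - p₁ ρ| := by
      have := abs_add_le (p₁ ρ) (p₂ ρ - p₁ ρ)
      simpa using this
    have h8 : C₀ * (jap (posPart ρ) ^ (n₁-1) + jap (momPart ρ) ^ (n₂-1))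
        ≤ C₀ * (jap (posPart ρ) ^ n₁ + jap (momPart ρ) ^ n₂) :=
      mul_le_mul_of_nonneg_left (add_le_add h2 h3) hC₀.le
    have h9 : C₀ * (jap (posPart ρ) ^ n₁ + jap (momPart ρ) ^ n₂) ≤ C₀ * (K₁ * jap (p₁ ρ)) :=
      mul_le_mul_of_nonneg_left h4 hC₀.le
    nlinarith
  set Kc : ℝ := 2 + C₀ * K₁ with hKcdef
  have hKc1 : 1 ≤ Kc := by nlinarith
  set K₀ : ℝ := K₁ + K₂ * Kc with hK₀def
  have hK₀1 : 1 ≤ K₀ := by nlinarith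
  -- both trajectories stay in the energy shell of p₁ ρ
  have htraj₁ : ∀ (s : ℝ) (ρ : PhaseSpace d),
      jap (posPart (φ₁ s ρ)) ^ n₁ + jap (momPart (φ₁ s ρ)) ^ n₂ ≤ K₀ * jap (p₁ ρ) := by
    intro s ρ
    have h1 := hKb₁ (φ₁ s ρ)
    rw [energy_conserved p₁ hp₁.1 φ₁ hφ₁ s ρ] at h1
    have h7 : 1 ≤ jap (p₁ ρ) := one_le_jap _
    have h8 : K₁ * jap (p₁ ρ) ≤ K₀ * jap (p₁ ρ) := by
      rw [hK₀def]
      have h9 := mul_nonneg (mul_nonneg (by linarith : (0:ℝ) ≤ K₂)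
        (by linarith : (0:ℝ) ≤ Kc)) (by linarith : (0:ℝ) ≤ jap (p₁ ρ))
      nlinarith
    linarith
  have htraj₂ : ∀ (s : ℝ) (ρ : PhaseSpace d),
      jap (posPart (φ₂ s ρ)) ^ n₁ + jap (momPart (φ₂ s ρ)) ^ n₂ ≤ K₀ * jap (p₁ ρ) := by
    intro s ρ
    have h1 := hKb₂ (φ₂ s ρ)
    rw [energy_conserved p₂ hp₂.1 φ₂ hφ₂ s ρ] at h1
    have h2 := mul_le_mul_of_nonneg_left (hcomp ρ) (by linarith : (0:ℝ) ≤ K₂)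
    have h7 : 1 ≤ jap (p₁ ρ) := one_le_jap _
    have h8 : K₂ * (Kc * jap (p₁ ρ)) ≤ K₀ * jap (p₁ ρ) := by
      rw [hK₀def]
      have h9 := mul_nonneg (by linarith : (0:ℝ) ≤ K₁) (by linarith : (0:ℝ) ≤ jap (p₁ ρ))
      nlinarith
    linarith
  obtain ⟨C₂, hC₂, hC₂b⟩ := hp₁.2 2
  have hC₂b' : ∀ σ : PhaseSpace d, ‖iteratedFDeriv ℝ 2 p₁ σ‖
      ≤ C₂ * (jap (posPart σ) ^ (n₁ - 2) + jap (momPart σ) ^ (n₂ - 2)) := by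
    intro σ
    have h := hC₂b σ
    have e1 : n₁ - ((2:ℕ):ℝ) = n₁ - 2 := by push_cast; ring
    have e2 : n₂ - ((2:ℕ):ℝ) = n₂ - 2 := by push_cast; ring
    rwa [e1, e2] at h
  obtain ⟨C₁, hC₁, hC₁b⟩ := hsame.2 1
  have hC₁b' : ∀ σ : PhaseSpace d, ‖iteratedFDeriv ℝ 1 (fun ρ => p₂ ρ - p₁ ρ) σ‖
      ≤ C₁ * (jap (posPart σ) ^ (n₁ - 2) + jap (momPart σ) ^ (n₂ - 2)) := by
    intro σ
    have h := hC₁b σ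
    have e1 : n₁ - 1 - ((1:ℕ):ℝ) = n₁ - 2 := by push_cast; ring
    have e2 : n₂ - 1 - ((1:ℕ):ℝ) = n₂ - 2 := by push_cast; ring
    rwa [e1, e2] at h
  -- power bound
  have key : ∀ (σ : PhaseSpace d) (KK E : ℝ), 1 ≤ KK → 1 ≤ E →
      jap (posPart σ) ^ n₁ + jap (momPart σ) ^ n₂ ≤ KK * E →
      jap (posPart σ) ^ (n₁ - 2) + jap (momPart σ) ^ (n₂ - 2) ≤ 2 * (KK * E ^ θ) := by
    intro σ KK E hKK hE hS
    have hb0 : (0:ℝ) ≤ jap (momPart σ) ^ n₂ := Real.rpow_nonneg (jap_nonneg _) _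
    have ha0 : (0:ℝ) ≤ jap (posPart σ) ^ n₁ := Real.rpow_nonneg (jap_nonneg _) _
    have hx : jap (posPart σ) ^ n₁ ≤ KK * E := by linarith
    have hξ : jap (momPart σ) ^ n₂ ≤ KK * E := by linarith
    have b1 := rpow_sub_two_bound (one_le_jap _) hn₁ hKK hE hθ0 hθ₁ hx
    have b2 := rpow_sub_two_bound (one_le_jap _) hn₂ hKK hE hθ0 hθ₂ hξ
    linarith
  set Cbig : ℝ := 4 * C₂ * K₀ + 2 * C₁ * K₀ + 1 with hCbigdef
  have hCbig0 : 0 < Cbig := by nlinarith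
  have hmain : ∀ ρ : PhaseSpace d, ∀ t : ℝ, 0 ≤ t →
      ‖φ₂ t ρ - φ₁ t ρ‖ ≤ Real.exp (Cbig * t * jap (p₁ ρ) ^ θ) := by
    intro ρ t ht
    set E : ℝ := jap (p₁ ρ) with hEdef
    have hE1 : 1 ≤ E := one_le_jap _
    have hEθ : 1 ≤ E ^ θ := Real.one_le_rpow hE1 hθ0
    set D : ℝ := Cbig * E ^ θ with hDdef
    have hD0 : 0 < D := by nlinarith
    set f : ℝ → PhaseSpace d := fun s => φ₂ s ρ - φ₁ s ρ with hfdef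
    set f' : ℝ → PhaseSpace d :=
      fun s => symplJ (gradient p₂ (φ₂ s ρ)) - symplJ (gradient p₁ (φ₁ s ρ)) with hf'def
    have hfderiv : ∀ s : ℝ, HasDerivAt f (f' s) s :=
      fun s => (hφ₂.2 ρ s).sub (hφ₁.2 ρ s)
    have hcont : ContinuousOn f (Set.Icc 0 t) :=
      fun s _ => (hfderiv s).continuousAt.continuousWithinAt
    have hbound : ∀ s ∈ Set.Ico 0 t, ‖f' s‖ ≤ D * ‖f s‖ + D := by
      intro s _
      have e1 : f' s = symplJ (gradient p₂ (φ₂ s ρ) - gradient p₁ (φ₁ s ρ)) := by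
        rw [hf'def, symplJ_sub]
      rw [e1, norm_symplJ]
      have tri : ‖gradient p₂ (φ₂ s ρ) - gradient p₁ (φ₁ s ρ)‖
          ≤ ‖gradient p₂ (φ₂ s ρ) - gradient p₁ (φ₂ s ρ)‖
            + ‖gradient p₁ (φ₂ s ρ) - gradient p₁ (φ₁ s ρ)‖ := by
        have h := norm_add_le (gradient p₂ (φ₂ s ρ) - gradient p₁ (φ₂ s ρ))
          (gradient p₁ (φ₂ s ρ) - gradient p₁ (φ₁ s ρ))
        rw [sub_add_sub_cancel] at h
        exact h
      -- first term
      have term1 : ‖gradient p₂ (φ₂ s ρ) - gradient p₁ (φ₂ s ρ)‖ ≤ 2 * C₁ * K₀ * E ^ θ := by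
        rw [gradient_sub_norm]
        have hfd : fderiv ℝ p₂ (φ₂ s ρ) - fderiv ℝ p₁ (φ₂ s ρ)
            = fderiv ℝ (fun ρ' => p₂ ρ' - p₁ ρ') (φ₂ s ρ) :=
          (fderiv_sub (hdiff₂ _) (hdiff₁ _)).symm
        rw [hfd, norm_fderiv_eq_iteratedFDeriv_one]
        refine le_trans (hC₁b' _) ?_
        have hk := key (φ₂ s ρ) K₀ E hK₀1 hE1 (htraj₂ s ρ)
        nlinarith
      -- second term : Lipschitz bound of ∇p₁ on the segment
      have term2 : ‖gradient p₁ (φ₂ s ρ) - gradient p₁ (φ₁ s ρ)‖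
          ≤ (4 * C₂ * K₀ * E ^ θ) * ‖φ₂ s ρ - φ₁ s ρ‖ := by
        rw [gradient_sub_norm]
        refine Convex.norm_image_sub_le_of_norm_fderiv_le
          (fun σ _ => hgrad2diff σ) ?_ (convex_segment _ _)
          (left_mem_segment ℝ (φ₁ s ρ) (φ₂ s ρ)) (right_mem_segment ℝ (φ₁ s ρ) (φ₂ s ρ))
        intro σ hσ
        rw [norm_fderiv2_eq_iteratedFDeriv_two]
        refine le_trans (hC₂b' σ) ?_
        have hseg := segment_S_bound hn₁ hn₂ hσ (htraj₁ s ρ) (htraj₂ s ρ)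
        have hk := key σ (2 * K₀) E (by linarith) hE1 (by linarith [hseg])
        nlinarith
      have hnn : 0 ≤ ‖f s‖ := norm_nonneg _
      have hfs : ‖f s‖ = ‖φ₂ s ρ - φ₁ s ρ‖ := rfl
      rw [hDdef]
      have hEθ0 : (0:ℝ) ≤ E ^ θ := by linarith
      have h10 : 2 * C₁ * K₀ * E ^ θ ≤ Cbig * E ^ θ := by
        rw [hCbigdef]
        have := mul_nonneg (show (0:ℝ) ≤ 4 * C₂ * K₀ + 1 by nlinarith) hEθ0
        nlinarith
      have h11 : 4 * C₂ * K₀ * E ^ θ * ‖φ₂ s ρ - φ₁ s ρ‖ ≤ Cbig * E ^ θ * ‖f s‖ := by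
        rw [hCbigdef, hfs]
        have := mul_nonneg (mul_nonneg (show (0:ℝ) ≤ 2 * C₁ * K₀ + 1 by nlinarith) hEθ0)
          (norm_nonneg (φ₂ s ρ - φ₁ s ρ))
        nlinarith
      linarith
    have hstart : ‖f 0‖ ≤ 0 := by
      simp [hfdef, hφ₁.1 ρ, hφ₂.1 ρ]
    have hgron := norm_le_gronwallBound_of_norm_deriv_right_le hcont
      (fun s _ => (hfderiv s).hasDerivWithinAt) hstart hbound t (Set.right_mem_Icc.mpr ht)
    rw [gronwallBound_of_K_ne_0 hD0.ne'] at hgron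
    simp only [sub_zero] at hgron
    have hsimp : (0:ℝ) * Real.exp (D * t) + D / D * (Real.exp (D * t) - 1)
        = Real.exp (D * t) - 1 := by
      rw [div_self hD0.ne']
      ring_nf
    rw [hsimp] at hgron
    have : Real.exp (D * t) - 1 ≤ Real.exp (Cbig * t * E ^ θ) := by
      have he : D * t = Cbig * t * E ^ θ := by rw [hDdef]; ring
      rw [he]
      linarith [Real.exp_pos (Cbig * t * E ^ θ)]
    exact le_trans hgron this
  refine ⟨⟨Cbig, hCbig0, hmain⟩, ?_⟩
  intro hle₁ hle₂
  refine ⟨Cbig, hCbig0, ?_⟩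
  intro ρ t ht
  have h := hmain ρ t ht
  have hm2 : max n₁ n₂ ≤ 2 := max_le hle₁ hle₂
  have hθeq : θ = 0 := by
    rw [hθdef]
    apply max_eq_left
    have : 1 ≤ 2 / max n₁ n₂ := by
      rw [le_div_iff₀ hnmax]
      linarith
    linarith
  rwa [hθeq, Real.rpow_zero, mul_one] at h


end
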